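/- arXiv:1707.06315 — 3 statements merged into one kernel-verified Lean document; each statement's English description precedes it below -/
import Mathlib

section
/- There exists no obstruction to making any prescribed match assignment 'reasonable' by appending identical covariates: for any n, p ∈ ℕ, any covariate data X : Fin n → (Fin p → Bool), any group assignment MG : Fin n → ℕ, and any real d_max > 0, there exist q ∈ ℕ and appended covariates A : Fin n → (Fin q → Bool) such that (i) A u = A v whenever MG u = MG v, and (ii) for all units u, v with MG u = MG v, the normalized distance √( |{j ∈ Fin (p+q) : the j-th coordinate of the concatenated covariate vectors [X u, A u] and [X v, A v] differ}| / (p+q) ) < d_max. -/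
/-- Proposition 1 (mathematical core): for any covariate data, any match assignment,
and any positive threshold `dmax`, one can append covariates (identical within each
matched group) so that the normalized distance between any two units in the same
matched group is below `dmax`. -/
theorem adversarial_append_makes_assignment_reasonable
    (n p : ℕ) (X : Fin n → Fin p → Bool) (MG : Fin n → ℕ)
    (dmax : ℝ) (hd : 0 < dmax) :
    ∃ (q : ℕ) (A : Fin n → Fin q → Bool),
      (∀ u v : Fin n, MG u = MG v → A u = A v) ∧
      (∀ u v : Fin n, MG u = MG v →
        Real.sqrt
          (((Finset.univ.filter
              (fun j : Fin (p + q) =>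
                Fin.append (X u) (A u) j ≠ Fin.append (X v) (A v) j)).card : ℝ)
            / ((p : ℝ) + (q : ℝ))) < dmax) := by
  obtain ⟨q, hq⟩ : ∃ q : ℕ, (p : ℝ) / dmax ^ 2 < q := exists_nat_gt _
  refine ⟨q, fun _ _ => false, fun _ _ _ => rfl, fun u v _ => ?_⟩
  have hq0 : (0:ℝ) ≤ (q:ℝ) := Nat.cast_nonneg _
  have hpq : (0:ℝ) < (p:ℝ) + q := by
    rcases Nat.eq_zero_or_pos q with h | h
    · exfalso
      rw [h] at hq
      simp at hq
      exact absurd hq (not_lt.mpr (div_nonneg (Nat.cast_nonneg _) (sq_nonneg _)))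
    · have : (0:ℝ) < q := by exact_mod_cast h
      linarith [Nat.cast_nonneg (α := ℝ) p]
  have hcard : ((Finset.univ.filter
      (fun j : Fin (p + q) =>
        Fin.append (X u) (fun _ => false) j ≠ Fin.append (X v) (fun _ => false) j)).card) ≤ p := by
    have hsub : (Finset.univ.filter
        (fun j : Fin (p + q) =>
          Fin.append (X u) (fun _ => false) j ≠ Fin.append (X v) (fun _ => false) j))
        ⊆ Finset.univ.filter (fun j : Fin (p + q) => (j : ℕ) < p) := by
      intro j hj
      simp only [Finset.mem_filter, Finset.mem_univ, true_and] at hj ⊢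
      by_contra hge
      push_neg at hge
      apply hj
      have hnl : ¬ (j : ℕ) < p := Nat.not_lt.mpr hge
      simp [Fin.append, Fin.addCases, hnl]
    calc _ ≤ (Finset.univ.filter (fun j : Fin (p + q) => (j : ℕ) < p)).card :=
          Finset.card_le_card hsub
      _ ≤ p := by
          have : (Finset.univ.filter (fun j : Fin (p + q) => (j : ℕ) < p)).card
              = Fintype.card {j : Fin (p+q) // (j:ℕ) < p} := (Fintype.card_subtype _).symm
          rw [this]
          have e : {j : Fin (p+q) // (j:ℕ) < p} ≃ Fin p :=
            ⟨fun j => ⟨j.1, j.2⟩, fun i => ⟨⟨i, lt_of_lt_of_le i.2 (Nat.le_add_right _ _)⟩, i.2⟩,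
              fun j => rfl, fun i => rfl⟩
          rw [Fintype.card_congr e, Fintype.card_fin]
  have hratio : ((Finset.univ.filter
      (fun j : Fin (p + q) =>
        Fin.append (X u) (fun _ => false) j ≠ Fin.append (X v) (fun _ => false) j)).card : ℝ)
      / ((p : ℝ) + q) < dmax ^ 2 := by
    rw [div_lt_iff₀ hpq]
    have hc : ((Finset.univ.filter
        (fun j : Fin (p + q) =>
          Fin.append (X u) (fun _ => false) j ≠ Fin.append (X v) (fun _ => false) j)).card : ℝ)
        ≤ p := by exact_mod_cast hcard
    have : (p : ℝ) < dmax ^ 2 * ((p:ℝ) + q) := by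
      rw [div_lt_iff₀ (pow_pos hd 2)] at hq
      nlinarith [sq_nonneg dmax, Nat.cast_nonneg (α := ℝ) p]
    linarith
  calc Real.sqrt _ < Real.sqrt (dmax ^ 2) := by
        apply Real.sqrt_lt_sqrt (div_nonneg (Nat.cast_nonneg _) (le_of_lt hpq)) hratio
    _ = dmax := Real.sqrt_sq hd.le
end

section
/- Let p ∈ ℕ and h : Fin p → ℕ be nondecreasing (h i ≤ h j whenever i ≤ j). Then the map sending a digit vector a : Fin p → ℕ to the natural number Σ_{k} a_k · (h_k)^k is injective on the set {a : Fin p → ℕ | ∀ k, a_k < h_k}. -/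
/-- Bound: if each digit `a k < h k` and each `h k ≤ M`, then the mixed-radix
sum is below `M ^ p`. -/
lemma mixed_radix_bound (p : ℕ) (h a : Fin p → ℕ) (M : ℕ)
    (ha : ∀ k, a k < h k) (hM : ∀ k, h k ≤ M) :
    ∑ k : Fin p, a k * (h k) ^ (k : ℕ) < M ^ p := by
  induction p with
  | zero => simp
  | succ n ih =>
    rw [Fin.sum_univ_castSucc]
    have hM1 : 1 ≤ M := le_trans (Nat.one_le_iff_ne_zero.mpr
      (by intro h0; have := ha (Fin.last n); omega)) (hM (Fin.last n))
    have htail : ∑ k : Fin n, (a k.castSucc) * (h k.castSucc) ^ (k : ℕ) < M ^ n := by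
      exact ih (fun k => h k.castSucc) (fun k => a k.castSucc)
        (fun k => ha k.castSucc) (fun k => hM k.castSucc)
    have hlast : a (Fin.last n) * (h (Fin.last n)) ^ n ≤ (M - 1) * M ^ n := by
      apply Nat.mul_le_mul
      · have := ha (Fin.last n); have := hM (Fin.last n); omega
      · exact Nat.pow_le_pow_left (hM _) n
    have : M ^ (n + 1) = M ^ n + (M - 1) * M ^ n := by
      rw [pow_succ, Nat.mul_comm]
      nth_rewrite 1 [show M = (M - 1) + 1 from (Nat.sub_add_cancel hM1).symm]
      rw [Nat.add_mul, Nat.one_mul, Nat.add_comm]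
    simp only [Fin.coe_castSucc, Fin.val_last]
    omega

/-- Uniqueness of the mixed-radix encoding used by FLAME's bit-vector implementation:
with nondecreasing arities `h`, the map `a ↦ ∑ₖ aₖ (hₖ)^k` is injective on digit
vectors satisfying `aₖ < hₖ` for all `k`. -/
theorem mixed_radix_encoding_injective
    (p : ℕ) (h : Fin p → ℕ) (hmono : ∀ i j : Fin p, i ≤ j → h i ≤ h j) :
    Set.InjOn (fun a : Fin p → ℕ => ∑ k : Fin p, a k * (h k) ^ (k : ℕ))
      {a : Fin p → ℕ | ∀ k, a k < h k} := by
  induction p with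
  | zero =>
    intro a ha b hb _
    funext k
    exact k.elim0
  | succ n ih =>
    intro a ha b hb hab
    simp only [Set.mem_setOf_eq] at ha hb
    simp only at hab
    rw [Fin.sum_univ_castSucc, Fin.sum_univ_castSucc] at hab
    set X := (h (Fin.last n)) ^ ((Fin.last n : Fin (n+1)) : ℕ) with hX
    have hMle : ∀ k : Fin n, h k.castSucc ≤ h (Fin.last n) :=
      fun k => hmono _ _ (Fin.le_last _)
    have hTa : ∑ k : Fin n, (a k.castSucc) * (h k.castSucc) ^ (k : ℕ) < X := by
      rw [hX]; simp only [Fin.val_last]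
      exact mixed_radix_bound n _ _ _ (fun k => ha k.castSucc) hMle
    have hTb : ∑ k : Fin n, (b k.castSucc) * (h k.castSucc) ^ (k : ℕ) < X := by
      rw [hX]; simp only [Fin.val_last]
      exact mixed_radix_bound n _ _ _ (fun k => hb k.castSucc) hMle
    simp only [Fin.coe_castSucc] at hab hTa hTb
    have hXpos : 0 < X := by omega
    have hdiv : a (Fin.last n) = b (Fin.last n) := by
      have h1 : (∑ k : Fin n, (a k.castSucc) * (h k.castSucc) ^ (k : ℕ)
          + a (Fin.last n) * X) / X = a (Fin.last n) := by
        rw [Nat.add_mul_div_right _ _ hXpos, Nat.div_eq_of_lt hTa, Nat.zero_add]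
      have h2 : (∑ k : Fin n, (b k.castSucc) * (h k.castSucc) ^ (k : ℕ)
          + b (Fin.last n) * X) / X = b (Fin.last n) := by
        rw [Nat.add_mul_div_right _ _ hXpos, Nat.div_eq_of_lt hTb, Nat.zero_add]
      rw [← h1, ← h2, hab]
    have htail : ∑ k : Fin n, (a k.castSucc) * (h k.castSucc) ^ (k : ℕ)
        = ∑ k : Fin n, (b k.castSucc) * (h k.castSucc) ^ (k : ℕ) := by
      rw [hdiv] at hab; omega
    have heq : (fun k : Fin n => a k.castSucc) = (fun k : Fin n => b k.castSucc) := by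
      apply ih (fun k => h k.castSucc)
        (fun i j hij => hmono _ _ (by simpa using hij))
      · exact fun k => ha k.castSucc
      · exact fun k => hb k.castSucc
      · simpa using htail
    funext k
    induction k using Fin.lastCases with
    | last => exact hdiv
    | cast k => exact congrFun heq k
end

section
/- Let p ∈ ℕ and h : Fin p → ℕ be nondecreasing with 2 ≤ h_0. Then the map sending a pair (t, a), where t ∈ ℕ with t < 2 and a : Fin p → ℕ with a_k < h_k for all k, to the natural number t + Σ_k a_k · (h_k)^{k+1} is injective. -/
private lemma enc_bound : ∀ (p : ℕ) (h : Fin p → ℕ) (M : ℕ), 2 ≤ M → (∀ k, h k ≤ M) →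
    ∀ (t : ℕ), t < 2 → ∀ a : Fin p → ℕ, (∀ k, a k < h k) →
    t + ∑ k : Fin p, a k * (h k) ^ ((k : ℕ) + 1) < M ^ (p + 1) := by
  intro p
  induction p with
  | zero =>
    intro h M hM _ t ht a _
    simpa using lt_of_lt_of_le ht (by simpa using hM)
  | succ p ih =>
    intro h M hM hle t ht a ha
    rw [Fin.sum_univ_castSucc, ← add_assoc]
    simp only [Fin.coe_castSucc]
    have h1 : t + ∑ k : Fin p, (a k.castSucc) * (h k.castSucc) ^ ((k:ℕ)+1) < M ^ (p+1) := by
      have := ih (fun k => h k.castSucc) M hM (fun k => hle _) t ht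
        (fun k => a k.castSucc) (fun k => ha _)
      simpa using this
    have h2 : a (Fin.last p) * h (Fin.last p) ^ (p + 1) ≤ (M - 1) * M ^ (p+1) := by
      have hL := hle (Fin.last p)
      have haL : a (Fin.last p) ≤ M - 1 := by
        have := ha (Fin.last p); omega
      exact Nat.mul_le_mul haL (Nat.pow_le_pow_left hL _)
    have key : M^(p+1) + (M-1)*M^(p+1) = M ^ (p+1+1) := by
      have h1M : 1 + (M-1) = M := by omega
      calc M^(p+1) + (M-1)*M^(p+1) = (1 + (M-1)) * M^(p+1) := by ring
        _ = M * M^(p+1) := by rw [h1M]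
        _ = M ^ (p+1+1) := (pow_succ' M (p+1)).symm
    have : a (Fin.last p) * h (Fin.last p) ^ ((Fin.last p : ℕ) + 1) ≤ (M - 1) * M ^ (p+1) := by
      simpa [Fin.val_last] using h2
    omega

private lemma enc_inj : ∀ (p : ℕ) (h : Fin p → ℕ), (∀ i j : Fin p, i ≤ j → h i ≤ h j) →
    (∀ hp : 0 < p, 2 ≤ h ⟨0, hp⟩) →
    ∀ (t t' : ℕ), t < 2 → t' < 2 →
      ∀ (a a' : Fin p → ℕ), (∀ k, a k < h k) → (∀ k, a' k < h k) →
        (t + ∑ k : Fin p, a k * (h k) ^ ((k : ℕ) + 1)) =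
          (t' + ∑ k : Fin p, a' k * (h k) ^ ((k : ℕ) + 1)) → t = t' ∧ a = a' := by
  intro p
  induction p with
  | zero =>
    intro h _ _ t t' ht ht' a a' _ _ heq
    simp only [Finset.univ_eq_empty, Finset.sum_empty, add_zero] at heq
    exact ⟨heq, funext fun k => k.elim0⟩
  | succ p ih =>
    intro h hmono h2 t t' ht ht' a a' ha ha' heq
    set M := h (Fin.last p) with hMdef
    have h2M : 2 ≤ M := le_trans (h2 p.succ_pos) (hmono _ _ (Fin.zero_le _))
    have hle : ∀ k : Fin p, h k.castSucc ≤ M := fun k => hmono _ _ (Fin.le_last _)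
    rw [Fin.sum_univ_castSucc, Fin.sum_univ_castSucc, ← add_assoc, ← add_assoc] at heq
    simp only [Fin.val_last, Fin.coe_castSucc] at heq
    set X := t + ∑ k : Fin p, a k.castSucc * h k.castSucc ^ ((k:ℕ)+1) with hX
    set Y := t' + ∑ k : Fin p, a' k.castSucc * h k.castSucc ^ ((k:ℕ)+1) with hY
    have hXb : X < M ^ (p+1) := by
      have := enc_bound p (fun k => h k.castSucc) M h2M hle t ht
        (fun k => a k.castSucc) (fun k => ha _)
      simpa using this
    have hYb : Y < M ^ (p+1) := by
      have := enc_bound p (fun k => h k.castSucc) M h2M hle t' ht'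
        (fun k => a' k.castSucc) (fun k => ha' _)
      simpa using this
    have hHpos : 0 < M ^ (p+1) := by positivity
    have hdig : a (Fin.last p) = a' (Fin.last p) := by
      have e1 : (X + a (Fin.last p) * M ^ (p+1)) / M ^ (p+1) = a (Fin.last p) := by
        rw [Nat.add_mul_div_right _ _ hHpos, Nat.div_eq_of_lt hXb, Nat.zero_add]
      have e2 : (Y + a' (Fin.last p) * M ^ (p+1)) / M ^ (p+1) = a' (Fin.last p) := by
        rw [Nat.add_mul_div_right _ _ hHpos, Nat.div_eq_of_lt hYb, Nat.zero_add]
      rw [← e1, ← e2]; exact congrArg (· / M ^ (p+1)) heq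
    have hXY : X = Y := by rw [hdig] at heq; omega
    have ihres := ih (fun k => h k.castSucc)
      (fun i j hij => hmono _ _ (by simpa using hij))
      (fun hp => h2 p.succ_pos)
      t t' ht ht' (fun k => a k.castSucc) (fun k => a' k.castSucc)
      (fun k => ha _) (fun k => ha' _) hXY
    refine ⟨ihres.1, funext fun i => ?_⟩
    refine Fin.lastCases hdig (fun k => ?_) i
    exact congrFun ihres.2 k

/-- Injectivity of the treatment-augmented encoding `b⁺ = t + ∑ₖ aₖ (hₖ)^(k+1)` used in
FLAME's bit-vector implementation: with nondecreasing arities `h` and `2 ≤ h 0`, two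
(treatment, covariates) pairs with `t < 2` and `aₖ < hₖ` encode to the same number only
if they are equal. -/
theorem treatment_augmented_encoding_injective
    (p : ℕ) (h : Fin p → ℕ) (hmono : ∀ i j : Fin p, i ≤ j → h i ≤ h j)
    (h2 : ∀ hp : 0 < p, 2 ≤ h ⟨0, hp⟩) :
    ∀ (t t' : ℕ), t < 2 → t' < 2 →
      ∀ (a a' : Fin p → ℕ), (∀ k, a k < h k) → (∀ k, a' k < h k) →
        (t + ∑ k : Fin p, a k * (h k) ^ ((k : ℕ) + 1)) =
          (t' + ∑ k : Fin p, a' k * (h k) ^ ((k : ℕ) + 1)) →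
        t = t' ∧ a = a' := by
  exact enc_inj p h hmono h2
end
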